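/- The number of Dyck paths of semilength n with a double rises, b peaks of height at least 2, and c hills equals the number of Dyck paths of semilength n with b double rises, a peaks of height at least 2, and c hills. -/

import Mathlib

/-- A Dyck word: a list of booleans (`true` = up-step, `false` = down-step)
with equally many ups and downs, every prefix having at least as many ups as downs. -/
def IsDyck (w : List Bool) : Prop :=
  w.count true = w.count false ∧
    ∀ k < w.length, (w.take k).count false ≤ (w.take k).count true

instance : DecidablePred IsDyck := fun w => by unfold IsDyck; infer_instance

/-- Number of double rises (factors `uu`). -/
def numDR (w : List Bool) : ℕ :=
  ((List.range w.length).filter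
    (fun i => w.getD i false = true ∧ w.getD (i+1) false = true)).length

/-- Number of peaks (factors `ud`). -/
def numPeaks (w : List Bool) : ℕ :=
  ((List.range w.length).filter
    (fun i => i+1 < w.length ∧ w.getD i false = true ∧ w.getD (i+1) true = false)).length

/-- Number of valleys (factors `du`). -/
def numValleys (w : List Bool) : ℕ :=
  ((List.range w.length).filter
    (fun i => i+1 < w.length ∧ w.getD i true = false ∧ w.getD (i+1) false = true)).length

/-- Number of hills: peaks whose up-step starts at height 0. -/
def numHills (w : List Bool) : ℕ :=
  ((List.range w.length).filter
    (fun i => i+1 < w.length ∧ w.getD i false = true ∧ w.getD (i+1) true = false ∧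
      (w.take i).count true = (w.take i).count false)).length

/-- Number of peaks of height at least 2: peaks whose up-step starts at positive height. -/
def numPeaks2 (w : List Bool) : ℕ :=
  ((List.range w.length).filter
    (fun i => i+1 < w.length ∧ w.getD i false = true ∧ w.getD (i+1) true = false ∧
      (w.take i).count false < (w.take i).count true)).length

/-- Tunnels of a Dyck word, as pairs `(i, j)`: position `i` holds an up-step, position `j`
a down-step, and the factor strictly between them is a Dyck word (so `w = A u B d C` with
`|A| = i`, `|C| = w.length - j - 1`). -/
def tunnels (w : List Bool) : Finset (ℕ × ℕ) :=
  ((Finset.range w.length) ×ˢ (Finset.range w.length)).filter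
    (fun p => p.1 < p.2 ∧ w.getD p.1 false = true ∧ w.getD p.2 true = false ∧
      IsDyck ((w.drop (p.1+1)).take (p.2 - p.1 - 1)))

/-- Number of tunnels whose midpoint lies on the vertical line `x = n - r`
(for a path of length `2n`); the midpoint of tunnel `(i,j)` has x-coordinate `(i+j+1)/2`. -/
def ctr (r : ℤ) (w : List Bool) : ℕ :=
  ((tunnels w).filter (fun p => (p.1 : ℤ) + p.2 + 1 = (w.length : ℤ) - 2*r)).card

/-- Number of tunnels whose midpoint lies strictly to the left of the line `x = n - r`. -/
def ltr (r : ℤ) (w : List Bool) : ℕ :=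
  ((tunnels w).filter (fun p => (p.1 : ℤ) + p.2 + 1 < (w.length : ℤ) - 2*r)).card

/-- Number of centered tunnels. -/
def ctCount (w : List Bool) : ℕ := ctr 0 w

/-- Number of left tunnels. -/
def ltCount (w : List Bool) : ℕ := ltr 0 w

/-- `π` avoids the pattern 321. -/
def Avoids321 {n : ℕ} (π : Equiv.Perm (Fin n)) : Prop :=
  ¬ ∃ i j k : Fin n, i < j ∧ j < k ∧ π k < π j ∧ π j < π i

/-- `π` avoids the pattern 132. -/
def Avoids132 {n : ℕ} (π : Equiv.Perm (Fin n)) : Prop :=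
  ¬ ∃ i j k : Fin n, i < j ∧ j < k ∧ π i < π k ∧ π k < π j

/-- Number of fixed points. -/
noncomputable def fpCount {n : ℕ} (π : Equiv.Perm (Fin n)) : ℕ := Nat.card {i : Fin n // π i = i}

/-- Number of excedances. -/
noncomputable def excCount {n : ℕ} (π : Equiv.Perm (Fin n)) : ℕ := Nat.card {i : Fin n // i < π i}

/-- Number of weak excedances. -/
noncomputable def wexcCount {n : ℕ} (π : Equiv.Perm (Fin n)) : ℕ := Nat.card {i : Fin n // i ≤ π i}

/-- Height difference: #ups - #downs. -/
def dfE (w : List Bool) : ℤ := (w.count true : ℤ) - (w.count false : ℤ)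

@[simp] lemma dfE_nil : dfE [] = 0 := rfl

lemma dfE_cons (a : Bool) (t : List Bool) :
    dfE (a :: t) = (if a then 1 else -1) + dfE t := by
  cases a <;> simp [dfE, List.count_cons] <;> ring

lemma dfE_append (X Y : List Bool) : dfE (X ++ Y) = dfE X + dfE Y := by
  simp [dfE, List.count_append]; ring

/-- Recursive double-rise count. -/
def dk : List Bool → ℕ
  | [] => 0
  | a :: t => (if a = true ∧ t.head? = some true then 1 else 0) + dk t

/-- Recursive peak count. -/
def pk : List Bool → ℕ
  | [] => 0
  | a :: t => (if a = true ∧ t.head? = some false then 1 else 0) + pk t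

/-- Recursive hill count starting at height `h`. -/
def hk : ℤ → List Bool → ℕ
  | _, [] => 0
  | h, a :: t => (if a = true ∧ t.head? = some false ∧ h = 0 then 1 else 0) +
      hk (h + if a then 1 else -1) t

/-- Recursive high-peak count starting at height `h`. -/
def qk : ℤ → List Bool → ℕ
  | _, [] => 0
  | h, a :: t => (if a = true ∧ t.head? = some false ∧ 0 < h then 1 else 0) +
      qk (h + if a then 1 else -1) t

lemma length_filter_range_succ (n : ℕ) (p : ℕ → Bool) :
    ((List.range (n+1)).filter p).length =
      (if p 0 then 1 else 0) + ((List.range n).filter (fun i => p (i+1))).length := by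
  rw [List.range_succ_eq_map, List.filter_cons]
  by_cases h : p 0 = true
  · simp [h, List.filter_map, Function.comp_def]; omega
  · simp [h, List.filter_map, Function.comp_def]

lemma getD_zero_true (t : List Bool) : (t.getD 0 false = true) ↔ t.head? = some true := by
  cases t <;> simp

lemma getD_zero_false (t : List Bool) :
    (0 < t.length ∧ t.getD 0 true = false) ↔ t.head? = some false := by
  cases t <;> simp

lemma numDR_cons (a : Bool) (t : List Bool) :
    numDR (a :: t) = (if a = true ∧ t.head? = some true then 1 else 0) + numDR t := by
  unfold numDR
  rw [show (a :: t).length = t.length + 1 from rfl, length_filter_range_succ]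
  congr 1
  rcases t with _ | ⟨b, t⟩ <;> cases a <;> simp

lemma numDR_eq_dk (w : List Bool) : numDR w = dk w := by
  induction w with
  | nil => rfl
  | cons a t ih => rw [numDR_cons, dk, ih]

lemma hk_eq_filter (t : List Bool) : ∀ h : ℤ, hk h t =
    ((List.range t.length).filter (fun i => decide (i+1 < t.length ∧ t.getD i false = true ∧
      t.getD (i+1) true = false ∧ h + dfE (t.take i) = 0))).length := by
  induction t with
  | nil => intro h; rfl
  | cons a t ih =>
    intro h
    rw [show (a :: t).length = t.length + 1 from rfl, length_filter_range_succ]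
    rw [hk]
    congr 1
    · rcases t with _ | ⟨b, t⟩ <;> cases a <;>
        by_cases hc : h = 0 <;> simp [hc] <;> omega
    · rw [ih]
      congr 1
      apply List.filter_congr
      intro i _
      apply decide_eq_decide.mpr
      simp only [List.getD_cons_succ, List.take_succ_cons, dfE_cons]
      constructor
      · rintro ⟨h1, h2, h3, h4⟩; exact ⟨by omega, h2, h3, by linarith⟩
      · rintro ⟨h1, h2, h3, h4⟩; exact ⟨by omega, h2, h3, by linarith⟩

lemma qk_eq_filter (t : List Bool) : ∀ h : ℤ, qk h t =
    ((List.range t.length).filter (fun i => decide (i+1 < t.length ∧ t.getD i false = true ∧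
      t.getD (i+1) true = false ∧ 0 < h + dfE (t.take i)))).length := by
  induction t with
  | nil => intro h; rfl
  | cons a t ih =>
    intro h
    rw [show (a :: t).length = t.length + 1 from rfl, length_filter_range_succ]
    rw [qk]
    congr 1
    · rcases t with _ | ⟨b, t⟩ <;> cases a <;>
        by_cases hc : 0 < h <;> simp [hc] <;> omega
    · rw [ih]
      congr 1
      apply List.filter_congr
      intro i _
      apply decide_eq_decide.mpr
      simp only [List.getD_cons_succ, List.take_succ_cons, dfE_cons]
      constructor
      · rintro ⟨h1, h2, h3, h4⟩; exact ⟨by omega, h2, h3, by linarith⟩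
      · rintro ⟨h1, h2, h3, h4⟩; exact ⟨by omega, h2, h3, by linarith⟩

lemma numHills_eq_hk (w : List Bool) : numHills w = hk 0 w := by
  rw [hk_eq_filter]
  unfold numHills
  congr 1
  apply List.filter_congr
  intro i _
  apply decide_eq_decide.mpr
  have : ((w.take i).count true = (w.take i).count false) ↔ 0 + dfE (w.take i) = 0 := by
    unfold dfE; omega
  tauto

lemma numPeaks2_eq_qk (w : List Bool) : numPeaks2 w = qk 0 w := by
  rw [qk_eq_filter]
  unfold numPeaks2
  congr 1
  apply List.filter_congr
  intro i _
  apply decide_eq_decide.mpr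
  have : ((w.take i).count false < (w.take i).count true) ↔ 0 < 0 + dfE (w.take i) := by
    unfold dfE; omega
  tauto

lemma dfE_cons_true (t : List Bool) : dfE (true :: t) = 1 + dfE t := by
  rw [dfE_cons]; norm_num

lemma dfE_cons_false (t : List Bool) : dfE (false :: t) = -1 + dfE t := by
  rw [dfE_cons]; norm_num

lemma dk_append (X Y : List Bool) : dk (X ++ Y) =
    dk X + dk Y + (if X.getLast? = some true ∧ Y.head? = some true then 1 else 0) := by
  induction X with
  | nil => simp [dk]
  | cons a X ih =>
    rcases X with _ | ⟨b, X⟩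
    · cases a <;> rcases Y with _ | ⟨c, Y⟩ <;> simp [dk] <;> cases c <;> simp [dk] <;> omega
    · rw [List.cons_append, dk, ih]
      simp only [List.cons_append, dk, List.head?_cons, List.getLast?_cons_cons]
      simp only [Option.some.injEq]
      omega

lemma pk_append (X Y : List Bool) : pk (X ++ Y) =
    pk X + pk Y + (if X.getLast? = some true ∧ Y.head? = some false then 1 else 0) := by
  induction X with
  | nil => simp [pk]
  | cons a X ih =>
    rcases X with _ | ⟨b, X⟩
    · cases a <;> rcases Y with _ | ⟨c, Y⟩ <;> simp [pk] <;> cases c <;> simp [pk] <;> omega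
    · rw [List.cons_append, pk, ih]
      simp only [List.cons_append, pk, List.head?_cons, List.getLast?_cons_cons]
      simp only [Option.some.injEq]
      omega

lemma hk_append (X Y : List Bool) : ∀ h : ℤ, hk h (X ++ Y) =
    hk h X + hk (h + dfE X) Y +
      (if X.getLast? = some true ∧ Y.head? = some false ∧ h + dfE X = 1 then 1 else 0) := by
  induction X with
  | nil => intro h; simp [hk]
  | cons a X ih =>
    intro h
    rcases X with _ | ⟨b, X⟩
    · cases a <;> rcases Y with _ | ⟨c, Y⟩ <;>
        simp [hk, dfE_cons] <;> cases c <;>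
        by_cases hc : h = 0 <;> simp [hk, hc, dfE_cons] <;> omega
    · rw [List.cons_append, hk, ih]
      simp only [List.cons_append, hk, List.head?_cons, List.getLast?_cons_cons]
      rw [show h + dfE (a :: b :: X) = h + (if a = true then (1:ℤ) else -1) + dfE (b :: X)
          from by rw [dfE_cons]; ring]
      simp only [Option.some.injEq]
      omega

lemma qk_append (X Y : List Bool) : ∀ h : ℤ, qk h (X ++ Y) =
    qk h X + qk (h + dfE X) Y +
      (if X.getLast? = some true ∧ Y.head? = some false ∧ 1 < h + dfE X then 1 else 0) := by
  induction X with
  | nil => intro h; simp [qk]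
  | cons a X ih =>
    intro h
    rcases X with _ | ⟨b, X⟩
    · cases a <;> rcases Y with _ | ⟨c, Y⟩ <;>
        simp [qk, dfE_cons] <;> cases c <;>
        by_cases hc : 0 < h <;> simp [qk, hc, dfE_cons] <;> omega
    · rw [List.cons_append, qk, ih]
      simp only [List.cons_append, qk, List.head?_cons, List.getLast?_cons_cons]
      rw [show h + dfE (a :: b :: X) = h + (if a = true then (1:ℤ) else -1) + dfE (b :: X)
          from by rw [dfE_cons]; ring]
      simp only [Option.some.injEq]
      omega

lemma hk_pos (X : List Bool) : ∀ h : ℤ, (∀ i, 0 < h + dfE (X.take i)) → hk h X = 0 := by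
  induction X with
  | nil => intro h _; rfl
  | cons a X ih =>
    intro h hp
    have h0 := hp 0
    simp only [List.take_zero, dfE_nil, add_zero] at h0
    rw [hk, ih (h + if a then 1 else -1) (fun i => by
      have := hp (i + 1)
      simp only [List.take_succ_cons, dfE_cons] at this
      linarith)]
    have : ¬ (a = true ∧ X.head? = some false ∧ h = 0) := by rintro ⟨_, _, rfl⟩; omega
    simp [this]

lemma qk_all (X : List Bool) : ∀ h : ℤ, (∀ i, 0 < h + dfE (X.take i)) → qk h X = pk X := by
  induction X with
  | nil => intro h _; rfl
  | cons a X ih =>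
    intro h hp
    have h0 := hp 0
    simp only [List.take_zero, dfE_nil, add_zero] at h0
    rw [qk, pk, ih (h + if a then 1 else -1) (fun i => by
      have := hp (i + 1)
      simp only [List.take_succ_cons, dfE_cons] at this
      linarith)]
    congr 1
    simp [h0]

/-- Diff-based Dyck predicate. -/
def DY (w : List Bool) : Prop := dfE w = 0 ∧ ∀ i, 0 ≤ dfE (w.take i)

lemma isDyck_iff_DY (w : List Bool) : IsDyck w ↔ DY w := by
  unfold IsDyck DY dfE
  constructor
  · rintro ⟨h1, h2⟩
    constructor
    · omega
    · intro i
      rcases lt_or_ge i w.length with hi | hi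
      · have := h2 i hi; omega
      · rw [List.take_of_length_le (by omega)]; omega
  · rintro ⟨h1, h2⟩
    constructor
    · omega
    · intro k _
      have := h2 k; omega

lemma DY_nil : DY [] := ⟨rfl, fun i => by simp⟩

lemma DY_head (w : List Bool) (hw : DY w) (hne : w ≠ []) : w.head? = some true := by
  rcases w with _ | ⟨a, t⟩
  · exact absurd rfl hne
  · have := hw.2 1
    cases a
    · simp [dfE, List.count_cons] at this
    · simp

lemma DY_getLast (w : List Bool) (hw : DY w) (hne : w ≠ []) : w.getLast? = some false := by
  rcases List.eq_nil_or_concat w with rfl | ⟨X, a, rfl⟩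
  · exact absurd rfl hne
  · rw [List.concat_eq_append, List.getLast?_concat]
    have h1 := hw.2 X.length
    rw [List.concat_eq_append, List.take_append_of_le_length (le_refl _), List.take_length] at h1
    have h2 := hw.1
    rw [List.concat_eq_append, dfE_append] at h2
    cases a
    · rfl
    · exfalso
      have e : dfE [true] = 1 := rfl
      rw [e] at h2
      omega

lemma dfE_take_append_ge (X Y : List Bool) (hX : dfE X = 0) (j : ℕ) :
    dfE ((X ++ Y).take (X.length + j)) = dfE (Y.take j) := by
  rw [List.take_length_add_append, dfE_append, hX, zero_add]

lemma DY_build (X Y : List Bool) (hX : DY X) (hY : DY Y) :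
    DY (true :: (X ++ false :: Y)) := by
  constructor
  · rw [dfE_cons, dfE_append, dfE_cons, hX.1, hY.1]; norm_num
  · intro i
    rcases i with _ | k
    · simp
    · rw [List.take_succ_cons, dfE_cons]
      rcases le_or_gt k X.length with hk | hk
      · rw [List.take_append_of_le_length hk]
        have := hX.2 k
        split_ifs with hs
        · omega
        · simp at hs
      · obtain ⟨j, rfl⟩ : ∃ j, k = X.length + (j + 1) := ⟨k - X.length - 1, by omega⟩
        rw [List.take_length_add_append, List.take_succ_cons, dfE_append, dfE_cons_false, hX.1]
        have := hY.2 j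
        split_ifs with hs
        · omega
        · simp at hs

/-- Split off the part of the word before the first return to height `-1`
(relative to starting height `h`). -/
def spl : ℕ → List Bool → List Bool
  | _, [] => []
  | 0, false :: _ => []
  | h+1, false :: t => false :: spl h t
  | h, true :: t => true :: spl (h+1) t

@[simp] lemma spl_nil (h : ℕ) : spl h [] = [] := by cases h <;> rfl
@[simp] lemma spl_true (h : ℕ) (t : List Bool) : spl h (true :: t) = true :: spl (h+1) t := by
  cases h <;> rfl
@[simp] lemma spl_false_zero (t : List Bool) : spl 0 (false :: t) = [] := rfl
@[simp] lemma spl_false_succ (h : ℕ) (t : List Bool) :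
    spl (h+1) (false :: t) = false :: spl h t := rfl

lemma spl_pref (A : List Bool) : ∀ (h : ℕ) (B : List Bool),
    (∀ i, 0 ≤ (h:ℤ) + dfE (A.take i)) → ((h:ℤ) + dfE A = 0) →
    spl h (A ++ false :: B) = A := by
  induction A with
  | nil =>
    intro h B _ h2
    simp only [dfE_nil, add_zero] at h2
    have : h = 0 := by exact_mod_cast h2
    subst this
    rfl
  | cons a A ih =>
    intro h B h1 h2
    cases a
    · have h0 : 0 < h := by
        have := h1 1
        simp only [List.take_succ_cons, List.take_zero, dfE_cons_false, dfE_nil] at this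
        omega
      obtain ⟨h', rfl⟩ : ∃ h', h = h' + 1 := ⟨h - 1, by omega⟩
      rw [List.cons_append, spl_false_succ,
        ih h' B (fun i => by
          have := h1 (i+1)
          simp only [List.take_succ_cons, dfE_cons_false] at this
          push_cast at this ⊢
          omega)
        (by rw [dfE_cons_false] at h2; push_cast at h2 ⊢; omega)]
    · rw [List.cons_append, spl_true,
        ih (h+1) B (fun i => by
          have := h1 (i+1)
          simp only [List.take_succ_cons, dfE_cons_true] at this
          push_cast at this ⊢
          omega)
        (by rw [dfE_cons_true] at h2; push_cast at h2 ⊢; omega)]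

lemma spl_spec (r : List Bool) : ∀ (h : ℕ), ((h:ℤ) + dfE r < 0) →
    ∃ B, r = spl h r ++ false :: B ∧ (h:ℤ) + dfE (spl h r) = 0 ∧
      ∀ i, 0 ≤ (h:ℤ) + dfE ((spl h r).take i) := by
  induction r with
  | nil => intro h hh; simp only [dfE_nil, add_zero] at hh; omega
  | cons a t ih =>
    intro h hh
    cases a
    · rcases Nat.eq_zero_or_pos h with rfl | h0
      · exact ⟨t, by simp, by simp, fun i => by simp⟩
      · obtain ⟨h', rfl⟩ : ∃ h', h = h' + 1 := ⟨h - 1, by omega⟩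
        obtain ⟨B, hB, hd, hp⟩ := ih h' (by rw [dfE_cons_false] at hh; push_cast at hh ⊢; omega)
        refine ⟨B, ?_, ?_, ?_⟩
        · rw [spl_false_succ, List.cons_append, ← hB]
        · rw [spl_false_succ, dfE_cons_false]; push_cast at hd ⊢; omega
        · intro i
          rcases i with _ | j
          · simp only [List.take_zero, dfE_nil, add_zero]; positivity
          · rw [spl_false_succ, List.take_succ_cons, dfE_cons_false]
            have := hp j
            push_cast at this ⊢
            omega
    · obtain ⟨B, hB, hd, hp⟩ := ih (h+1) (by rw [dfE_cons_true] at hh; push_cast at hh ⊢; omega)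
      refine ⟨B, ?_, ?_, ?_⟩
      · rw [spl_true, List.cons_append, ← hB]
      · rw [spl_true, dfE_cons_true]; push_cast at hd ⊢; omega
      · intro i
        rcases i with _ | j
        · simp only [List.take_zero, dfE_nil, add_zero]; positivity
        · rw [spl_true, List.take_succ_cons, dfE_cons_true]
          have := hp j
          push_cast at this ⊢
          omega

lemma dk_true_cons (Y : List Bool) :
    dk (true :: Y) = (if Y.head? = some true then 1 else 0) + dk Y := by simp [dk]

lemma pk_true_cons (Y : List Bool) :
    pk (true :: Y) = (if Y.head? = some false then 1 else 0) + pk Y := by simp [pk]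

lemma hk_true_cons (h : ℤ) (Y : List Bool) :
    hk h (true :: Y) = (if Y.head? = some false ∧ h = 0 then 1 else 0) + hk (h+1) Y := by
  simp [hk]

lemma qk_true_cons (h : ℤ) (Y : List Bool) :
    qk h (true :: Y) = (if Y.head? = some false ∧ 0 < h then 1 else 0) + qk (h+1) Y := by
  simp [qk]

lemma dk_false_cons (Y : List Bool) : dk (false :: Y) = dk Y := by simp [dk]
lemma pk_false_cons (Y : List Bool) : pk (false :: Y) = pk Y := by simp [pk]
lemma hk_false_cons (h : ℤ) (Y : List Bool) : hk h (false :: Y) = hk (h + -1) Y := by simp [hk]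
lemma qk_false_cons (h : ℤ) (Y : List Bool) : qk h (false :: Y) = qk (h + -1) Y := by simp [qk]

lemma head?_append_cons (X : List Bool) (hX : X.head? = some true) (z : Bool) (Y : List Bool) :
    (X ++ z :: Y).head? = some true := by
  rcases X with _ | ⟨x, X⟩
  · simp at hX
  · simp at hX; simp [hX]

lemma dk_struct (X Y : List Bool) (hX : DY X) :
    dk (true :: (X ++ false :: Y)) = (if X = [] then 0 else 1) + dk X + dk Y := by
  rw [dk_true_cons, dk_append, dk_false_cons]
  rcases eq_or_ne X [] with rfl | hne
  · simp [dk]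
  · have h1 := head?_append_cons X (DY_head X hX hne) false Y
    have h2 := DY_getLast X hX hne
    rw [h1, h2]
    simp [hne]
    omega

lemma pk_struct (X Y : List Bool) (hX : DY X) :
    pk (true :: (X ++ false :: Y)) = (if X = [] then 1 else 0) + pk X + pk Y := by
  rw [pk_true_cons, pk_append, pk_false_cons]
  rcases eq_or_ne X [] with rfl | hne
  · simp [pk]
  · have h1 := head?_append_cons X (DY_head X hX hne) false Y
    have h2 := DY_getLast X hX hne
    rw [h1, h2]
    simp [hne]

lemma hk_struct (X Y : List Bool) (hX : DY X) :
    hk 0 (true :: (X ++ false :: Y)) = (if X = [] then 1 else 0) + hk 0 Y := by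
  rw [hk_true_cons, hk_append, hX.1, hk_false_cons]
  simp only [zero_add, add_zero]
  rw [hk_pos X 1 (fun i => by have := hX.2 i; omega),
    show (1:ℤ) + -1 = 0 from by ring]
  rcases eq_or_ne X [] with rfl | hne
  · simp
  · have h1 := head?_append_cons X (DY_head X hX hne) false Y
    have h2 := DY_getLast X hX hne
    rw [h1, h2]
    simp [hne]

lemma qk_struct (X Y : List Bool) (hX : DY X) :
    qk 0 (true :: (X ++ false :: Y)) = pk X + qk 0 Y := by
  rw [qk_true_cons, qk_append, hX.1, qk_false_cons]
  simp only [zero_add, add_zero]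
  rw [qk_all X 1 (fun i => by have := hX.2 i; omega),
    show (1:ℤ) + -1 = 0 from by ring]
  rcases eq_or_ne X [] with rfl | hne
  · simp
  · have h2 := DY_getLast X hX hne
    rw [h2]
    simp

lemma drop_of_append (X Y : List Bool) (z : Bool) : (X ++ z :: Y).drop (X.length + 1) = Y := by
  rw [show X ++ z :: Y = (X ++ [z]) ++ Y from by simp,
      show X.length + 1 = (X ++ [z]).length from by simp]
  exact List.drop_left

lemma DY_decomp' (r : List Bool) (hr : DY (true :: r)) :
    ∃ A B, spl 0 r = A ∧ r.drop (A.length + 1) = B ∧ r = A ++ false :: B ∧ DY A ∧ DY B := by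
  have hdr : ((0:ℕ):ℤ) + dfE r < 0 := by
    have := hr.1; rw [dfE_cons_true] at this; push_cast; omega
  obtain ⟨B, hB, hd, hp⟩ := spl_spec r 0 hdr
  obtain ⟨A, hA⟩ : ∃ A, spl 0 r = A := ⟨_, rfl⟩
  rw [hA] at hB hd hp
  push_cast at hd hp
  have hdA : dfE A = 0 := by omega
  refine ⟨A, B, hA, ?_, hB, ⟨hdA, fun i => by have := hp i; omega⟩, ?_, ?_⟩
  · conv_lhs => rw [hB]
    exact drop_of_append A B false
  · have h1 := hr.1
    rw [dfE_cons_true, hB, dfE_append, dfE_cons_false, hdA] at h1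
    omega
  · intro j
    have key := hr.2 (A.length + (j + 1) + 1)
    rw [List.take_succ_cons, dfE_cons_true, hB, List.take_length_add_append, List.take_succ_cons,
      dfE_append, dfE_cons_false, hdA] at key
    omega

lemma spl_of_DY (X : List Bool) (hX : DY X) (B' : List Bool) : spl 0 (X ++ false :: B') = X :=
  spl_pref X 0 B' (fun i => by have := hX.2 i; push_cast; omega)
    (by have := hX.1; push_cast; omega)

/-- The recursive involution swapping double rises (+1) with peaks on nonempty Dyck words. -/
def phiF : ℕ → List Bool → List Bool
  | 0, w => w
  | _+1, [] => []
  | _+1, false :: r => false :: r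
  | f+1, true :: r =>
    if spl 0 r = [] then
      (if r.drop 1 = [] then [true, false]
       else true :: (phiF f (r.drop 1) ++ [false]))
    else
      (if r.drop ((spl 0 r).length + 1) = [] then true :: false :: phiF f (spl 0 r)
       else true :: (phiF f (spl 0 r) ++ false :: phiF f (r.drop ((spl 0 r).length + 1))))

lemma phiF_eq (f : ℕ) (r : List Bool) : phiF (f+1) (true :: r) =
    if spl 0 r = [] then
      (if r.drop 1 = [] then [true, false]
       else true :: (phiF f (r.drop 1) ++ [false]))
    else
      (if r.drop ((spl 0 r).length + 1) = [] then true :: false :: phiF f (spl 0 r)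
       else true :: (phiF f (spl 0 r) ++ false :: phiF f (r.drop ((spl 0 r).length + 1)))) := by
  rfl

lemma phiF_main : ∀ f w, w.length ≤ f → DY w → w ≠ [] →
    DY (phiF f w) ∧ (phiF f w).length = w.length ∧ phiF f w ≠ [] ∧
    dk (phiF f w) + 1 = pk w ∧ pk (phiF f w) = dk w + 1 ∧ phiF f (phiF f w) = w := by
  intro f
  induction f with
  | zero =>
    intro w hl _ hne
    rcases w with _ | ⟨a, t⟩
    · exact absurd rfl hne
    · simp at hl
  | succ f ih =>
    intro w hl hw hne
    obtain ⟨r, rfl⟩ : ∃ r, w = true :: r := by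
      rcases w with _ | ⟨a, r⟩
      · exact absurd rfl hne
      · have h := DY_head _ hw hne
        simp only [List.head?_cons, Option.some_inj] at h
        exact ⟨r, by rw [h]⟩
    obtain ⟨A, B, hsA, hsB, hr, hDA, hDB⟩ := DY_decomp' r hw
    subst hr
    have hlA : A.length ≤ f := by simp at hl; omega
    have hlB : B.length ≤ f := by simp at hl; omega
    rcases eq_or_ne A [] with rfl | hAne
    · have hd1 : (([] : List Bool) ++ false :: B).drop 1 = B := by simp
      rcases eq_or_ne B [] with rfl | hBne
      · -- w = [true, false]
        have hphi : phiF (f+1) (true :: (([]:List Bool) ++ false :: [])) = [true, false] := by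
          rw [phiF_eq, hsA, hd1]
          simp
        rw [hphi]
        refine ⟨DY_build [] [] DY_nil DY_nil, by simp, by simp, by decide, by decide, ?_⟩
        rw [show ([true, false] : List Bool) = true :: (([]:List Bool) ++ false :: []) from by simp,
          phiF_eq]
        rw [show spl 0 (([]:List Bool) ++ false :: []) = [] from rfl]
        simp
      · -- w = u d B,  φw = u φB d
        obtain ⟨hDB', hlenB, hneB', hdkB, hpkB, hinvB⟩ := ih B hlB hDB hBne
        have hphi : phiF (f+1) (true :: (([]:List Bool) ++ false :: B)) =
            true :: (phiF f B ++ false :: []) := by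
          rw [phiF_eq, hsA, hd1]
          simp [hBne]
        rw [hphi]
        refine ⟨DY_build _ _ hDB' DY_nil, ?_, by simp, ?_, ?_, ?_⟩
        · simp; omega
        · rw [dk_struct _ _ hDB', pk_struct _ _ hDA]
          simp only [if_neg hneB']
          simp [dk, pk]
          omega
        · rw [pk_struct _ _ hDB', dk_struct _ _ hDA]
          simp only [if_neg hneB']
          simp [dk, pk]
          omega
        · rw [phiF_eq, spl_of_DY _ hDB', drop_of_append]
          simp only [if_neg hneB']
          simp [hinvB]
    · rcases eq_or_ne B [] with rfl | hBne
      · -- w = u A d,  φw = u d φA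
        obtain ⟨hDA', hlenA, hneA', hdkA, hpkA, hinvA⟩ := ih A hlA hDA hAne
        have hphi : phiF (f+1) (true :: (A ++ false :: [])) =
            true :: (([]:List Bool) ++ false :: phiF f A) := by
          rw [phiF_eq, hsA, hsB]
          simp [hAne]
        rw [hphi]
        refine ⟨DY_build _ _ DY_nil hDA', ?_, by simp, ?_, ?_, ?_⟩
        · simp; omega
        · rw [dk_struct _ _ DY_nil, pk_struct _ _ hDA]
          simp only [if_pos rfl, if_neg hAne]
          simp [pk, dk]
          omega
        · rw [pk_struct _ _ DY_nil, dk_struct _ _ hDA]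
          simp only [if_pos rfl, if_neg hAne]
          simp [pk, dk]
          omega
        · rw [phiF_eq]
          rw [show spl 0 (([]:List Bool) ++ false :: phiF f A) = [] from rfl]
          simp [hneA', hinvA]
      · -- w = u A d B, φw = u φA d φB
        obtain ⟨hDA', hlenA, hneA', hdkA, hpkA, hinvA⟩ := ih A hlA hDA hAne
        obtain ⟨hDB', hlenB, hneB', hdkB, hpkB, hinvB⟩ := ih B hlB hDB hBne
        have hphi : phiF (f+1) (true :: (A ++ false :: B)) =
            true :: (phiF f A ++ false :: phiF f B) := by
          rw [phiF_eq, hsA, hsB]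
          simp [hAne, hBne]
        rw [hphi]
        refine ⟨DY_build _ _ hDA' hDB', ?_, by simp, ?_, ?_, ?_⟩
        · simp; omega
        · rw [dk_struct _ _ hDA', pk_struct _ _ hDA]
          simp only [if_neg hneA', if_neg hAne]
          omega
        · rw [pk_struct _ _ hDA', dk_struct _ _ hDA]
          simp only [if_neg hneA', if_neg hAne]
          omega
        · rw [phiF_eq, spl_of_DY _ hDA', drop_of_append]
          simp only [if_neg hneA', if_neg hneB']
          rw [hinvA, hinvB]

/-- The involution on Dyck words swapping double rises with high peaks, fixing hills. -/
def PhiF : ℕ → List Bool → List Bool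
  | 0, w => w
  | _+1, [] => []
  | _+1, false :: r => false :: r
  | f+1, true :: r =>
    if spl 0 r = [] then true :: false :: PhiF f (r.drop 1)
    else true :: (phiF f (spl 0 r) ++ false :: PhiF f (r.drop ((spl 0 r).length + 1)))

lemma PhiF_eq (f : ℕ) (r : List Bool) : PhiF (f+1) (true :: r) =
    if spl 0 r = [] then true :: false :: PhiF f (r.drop 1)
    else true :: (phiF f (spl 0 r) ++ false :: PhiF f (r.drop ((spl 0 r).length + 1))) := rfl

lemma PhiF_nil (f : ℕ) : PhiF f [] = [] := by cases f <;> rfl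

lemma PhiF_main : ∀ f w, w.length ≤ f → DY w →
    DY (PhiF f w) ∧ (PhiF f w).length = w.length ∧
    dk (PhiF f w) = qk 0 w ∧ qk 0 (PhiF f w) = dk w ∧ hk 0 (PhiF f w) = hk 0 w ∧
    PhiF f (PhiF f w) = w := by
  intro f
  induction f with
  | zero =>
    intro w hl hw
    rcases w with _ | ⟨a, t⟩
    · exact ⟨hw, rfl, rfl, rfl, rfl, rfl⟩
    · simp at hl
  | succ f ih =>
    intro w hl hw
    rcases eq_or_ne w [] with rfl | hne
    · rw [PhiF_nil]
      exact ⟨hw, rfl, rfl, rfl, rfl, by rw [PhiF_nil]⟩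
    obtain ⟨r, rfl⟩ : ∃ r, w = true :: r := by
      rcases w with _ | ⟨a, r⟩
      · exact absurd rfl hne
      · have h := DY_head _ hw hne
        simp only [List.head?_cons, Option.some_inj] at h
        exact ⟨r, by rw [h]⟩
    obtain ⟨A, B, hsA, hsB, hr, hDA, hDB⟩ := DY_decomp' r hw
    subst hr
    have hlA : A.length ≤ f := by simp at hl; omega
    have hlB : B.length ≤ f := by simp at hl; omega
    obtain ⟨hDB', hlenB, hdkB, hqkB, hhkB, hinvB⟩ := ih B hlB hDB
    rcases eq_or_ne A [] with rfl | hAne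
    · -- w = u d B,  Φw = u d ΦB
      have hd1 : (([] : List Bool) ++ false :: B).drop 1 = B := by simp
      have hphi : PhiF (f+1) (true :: (([]:List Bool) ++ false :: B)) =
          true :: (([]:List Bool) ++ false :: PhiF f B) := by
        rw [PhiF_eq, hsA, hd1]
        simp
      rw [hphi]
      refine ⟨DY_build _ _ DY_nil hDB', ?_, ?_, ?_, ?_, ?_⟩
      · simp; omega
      · rw [dk_struct _ _ DY_nil, qk_struct _ _ hDA]
        simp [pk, dk, hdkB]
      · rw [qk_struct _ _ DY_nil, dk_struct _ _ hDA]
        simp [pk, dk, hqkB]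
      · rw [hk_struct _ _ DY_nil, hk_struct _ _ hDA]
        simp [hhkB]
      · rw [PhiF_eq]
        rw [show spl 0 (([]:List Bool) ++ false :: PhiF f B) = [] from rfl]
        simp [hinvB]
    · -- w = u A d B,  Φw = u φA d ΦB
      obtain ⟨hDA', hlenA, hneA', hdkA, hpkA, hinvA⟩ := phiF_main f A hlA hDA hAne
      have hphi : PhiF (f+1) (true :: (A ++ false :: B)) =
          true :: (phiF f A ++ false :: PhiF f B) := by
        rw [PhiF_eq, hsA, hsB]
        simp [hAne]
      rw [hphi]
      refine ⟨DY_build _ _ hDA' hDB', ?_, ?_, ?_, ?_, ?_⟩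
      · simp; omega
      · rw [dk_struct _ _ hDA', qk_struct _ _ hDA]
        simp only [if_neg hneA']
        omega
      · rw [qk_struct _ _ hDA', dk_struct _ _ hDA]
        simp only [if_neg hAne]
        omega
      · rw [hk_struct _ _ hDA', hk_struct _ _ hDA]
        simp only [if_neg hneA', if_neg hAne]
        omega
      · rw [PhiF_eq, spl_of_DY _ hDA', drop_of_append]
        simp only [if_neg hneA']
        rw [hinvA, hinvB]

lemma stats_shift (w : List Bool) (hw : IsDyck w) (f : ℕ) (hl : w.length ≤ f) :
    (PhiF f w).length = w.length ∧ IsDyck (PhiF f w) ∧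
    numDR (PhiF f w) = numPeaks2 w ∧ numPeaks2 (PhiF f w) = numDR w ∧
    numHills (PhiF f w) = numHills w ∧ PhiF f (PhiF f w) = w := by
  obtain ⟨hD, hlen, hdk, hqk, hhk, hinv⟩ := PhiF_main f w hl ((isDyck_iff_DY w).mp hw)
  refine ⟨hlen, (isDyck_iff_DY _).mpr hD, ?_, ?_, ?_, hinv⟩
  · rw [numDR_eq_dk, numPeaks2_eq_qk, hdk]
  · rw [numDR_eq_dk, numPeaks2_eq_qk, hqk]
  · rw [numHills_eq_hk, numHills_eq_hk, hhk]

/-- The number of Dyck paths of semilength `n` with `a` double rises, `b` peaks of height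
at least 2 and `c` hills equals the number with `b` double rises, `a` peaks of height at
least 2 and `c` hills. -/
theorem stmt7 (n a b c : ℕ) :
    Nat.card {w : List Bool // w.length = 2 * n ∧ IsDyck w ∧
        numDR w = a ∧ numPeaks2 w = b ∧ numHills w = c} =
    Nat.card {w : List Bool // w.length = 2 * n ∧ IsDyck w ∧
        numDR w = b ∧ numPeaks2 w = a ∧ numHills w = c} := by
  apply Nat.card_congr
  refine ⟨fun x => ⟨PhiF (2*n) x.1, ?_⟩, fun x => ⟨PhiF (2*n) x.1, ?_⟩, ?_, ?_⟩
  · obtain ⟨hlen, hd, h1, h2, h3⟩ := x.2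
    obtain ⟨e1, e2, e3, e4, e5, _⟩ := stats_shift x.1 hd (2*n) (le_of_eq hlen)
    exact ⟨by rw [e1, hlen], e2, by rw [e3, h2], by rw [e4, h1], by rw [e5, h3]⟩
  · obtain ⟨hlen, hd, h1, h2, h3⟩ := x.2
    obtain ⟨e1, e2, e3, e4, e5, _⟩ := stats_shift x.1 hd (2*n) (le_of_eq hlen)
    exact ⟨by rw [e1, hlen], e2, by rw [e3, h2], by rw [e4, h1], by rw [e5, h3]⟩
  · intro x
    obtain ⟨hlen, hd, _⟩ := x.2
    obtain ⟨_, _, _, _, _, e6⟩ := stats_shift x.1 hd (2*n) (le_of_eq hlen)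
    exact Subtype.ext e6
  · intro x
    obtain ⟨hlen, hd, _⟩ := x.2
    obtain ⟨_, _, _, _, _, e6⟩ := stats_shift x.1 hd (2*n) (le_of_eq hlen)
    exact Subtype.ext e6
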